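/- Let N ≥ 1, let 0 < k₁ < ⋯ < k_N be real numbers, let c̃₁, …, c̃_N ∈ ℝ satisfy (−1)^{j−1}·c̃ⱼ > 0, define ψⱼ(x) := e^{kⱼx} + c̃ⱼ·e^{−kⱼx}, and let k > 0 be real. Then the function F(x) := e^{−ikx} · W[ψ₁, …, ψ_N, x↦e^{ikx}](x) / W[ψ₁, …, ψ_N](x) satisfies: F(x) → ∏_{j=1}^{N}(ik − kⱼ) as x → +∞, and F(x) → ∏_{j=1}^{N}(ik + kⱼ) as x → −∞. -/

import Mathlib

open Filter Finset Complex


/-- The Wronskian of `n` functions: determinant of the matrix whose `(j,k)` entry is the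
`j`-th derivative (0-based) of the `k`-th function. -/
noncomputable def wronskian (n : ℕ) (f : Fin n → ℝ → ℂ) (x : ℝ) : ℂ :=
  (Matrix.of fun j k : Fin n => iteratedDeriv (j : ℕ) (f k) x).det

lemma hasDerivAt_cexp_mul (w : ℂ) (x : ℝ) :
    HasDerivAt (fun y : ℝ => Complex.exp (w * y)) (w * Complex.exp (w * x)) x := by
  have h1 : HasDerivAt (fun y : ℝ => (y : ℂ)) 1 x := by
    simpa using (hasDerivAt_id x).ofReal_comp
  have h2 : HasDerivAt (fun y : ℝ => w * (y : ℂ)) w x := by simpa using h1.const_mul w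
  simpa [mul_comm] using h2.cexp

lemma iteratedDeriv_two_exp (a b lam mu : ℂ) (n : ℕ) :
    iteratedDeriv n (fun y : ℝ => a * Complex.exp (lam * y) + b * Complex.exp (mu * y))
      = fun x : ℝ => a * lam ^ n * Complex.exp (lam * x) + b * mu ^ n * Complex.exp (mu * x) := by
  induction n with
  | zero => funext x; simp
  | succ n ih =>
    rw [iteratedDeriv_succ, ih]
    funext x
    have h : HasDerivAt
        (fun y : ℝ => a * lam ^ n * Complex.exp (lam * y) + b * mu ^ n * Complex.exp (mu * y))
        (a * lam ^ n * (lam * Complex.exp (lam * x)) + b * mu ^ n * (mu * Complex.exp (mu * x)))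
        x := ((hasDerivAt_cexp_mul lam x).const_mul _).add ((hasDerivAt_cexp_mul mu x).const_mul _)
    rw [h.deriv]; ring

/-- Master expansion of the Wronskian of sums of two exponentials. -/
lemma wronskian_expansion {n : ℕ} (a lam : Fin n → Bool → ℂ) (f : Fin n → ℝ → ℂ)
    (hf : ∀ k, f k = fun y : ℝ =>
      a k true * Complex.exp (lam k true * y) + a k false * Complex.exp (lam k false * y))
    (x : ℝ) :
    wronskian n f x = ∑ ε : Fin n → Bool,
      ((∏ i, a i (ε i)) * ∏ i : Fin n, ∏ j ∈ Finset.Ioi i, (lam j (ε j) - lam i (ε i)))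
        * Complex.exp ((∑ i, lam i (ε i)) * x) := by
  have hentry : ∀ (jj : ℕ) (kk : Fin n),
      iteratedDeriv jj (f kk) x
        = ∑ b : Bool, (a kk b * Complex.exp (lam kk b * x)) * lam kk b ^ jj := by
    intro jj kk
    rw [hf kk, iteratedDeriv_two_exp]
    simp [Fintype.sum_bool]
    ring
  unfold wronskian
  rw [← Matrix.det_transpose]
  have hM : (Matrix.of fun j k : Fin n => iteratedDeriv (j : ℕ) (f k) x).transpose
      = Matrix.of (fun kk jj : Fin n =>
          ∑ b : Bool, (a kk b * Complex.exp (lam kk b * x)) * lam kk b ^ (jj : ℕ)) := by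
    ext kk jj
    simp [Matrix.transpose_apply, hentry]
  rw [hM]
  have key : (Matrix.of (fun kk jj : Fin n =>
      ∑ b : Bool, (a kk b * Complex.exp (lam kk b * x)) * lam kk b ^ (jj : ℕ))).det
      = ∑ ε : Fin n → Bool,
          (∏ i, a i (ε i) * Complex.exp (lam i (ε i) * x))
            * (Matrix.vandermonde (fun i => lam i (ε i))).det := by
    have := (Matrix.detRowAlternating (n := Fin n) (R := ℂ)).toMultilinearMap.map_sum
      (α := fun _ : Fin n => Bool)
      (g := fun kk b => (a kk b * Complex.exp (lam kk b * x)) • fun jj : Fin n => lam kk b ^ (jj : ℕ))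
    have h2 : ∀ ε : Fin n → Bool,
        (Matrix.detRowAlternating (n := Fin n) (R := ℂ)).toMultilinearMap
          (fun kk => (a kk (ε kk) * Complex.exp (lam kk (ε kk) * x)) • fun jj : Fin n => lam kk (ε kk) ^ (jj : ℕ))
        = (∏ i, a i (ε i) * Complex.exp (lam i (ε i) * x))
            * (Matrix.vandermonde (fun i => lam i (ε i))).det := by
      intro ε
      rw [MultilinearMap.map_smul_univ]
      rfl
    calc (Matrix.of (fun kk jj : Fin n =>
            ∑ b : Bool, (a kk b * Complex.exp (lam kk b * x)) * lam kk b ^ (jj : ℕ))).det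
        = (Matrix.detRowAlternating (n := Fin n) (R := ℂ)).toMultilinearMap
            (fun kk => ∑ b : Bool,
              (a kk b * Complex.exp (lam kk b * x)) • fun jj : Fin n => lam kk b ^ (jj : ℕ)) := by
          congr 1
      _ = ∑ ε : Fin n → Bool,
            (Matrix.detRowAlternating (n := Fin n) (R := ℂ)).toMultilinearMap
              (fun kk => (a kk (ε kk) * Complex.exp (lam kk (ε kk) * x)) • fun jj : Fin n => lam kk (ε kk) ^ (jj : ℕ)) := this
      _ = _ := by exact Finset.sum_congr rfl fun ε _ => h2 ε
  rw [key]
  refine Finset.sum_congr rfl fun ε _ => ?_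
  rw [Matrix.det_vandermonde, Finset.prod_mul_distrib, Finset.sum_mul, Complex.exp_sum]
  ring

lemma tendsto_cexp_atTop_zero {w : ℂ} (hw : w.re < 0) :
    Tendsto (fun x : ℝ => Complex.exp (w * x)) atTop (nhds 0) := by
  rw [tendsto_zero_iff_norm_tendsto_zero]
  have hn : ∀ x : ℝ, ‖Complex.exp (w * x)‖ = Real.exp (w.re * x) := by
    intro x
    rw [Complex.norm_exp]
    congr 1
    simp [Complex.mul_re]
  simp only [hn]
  have h1 : Tendsto (fun x : ℝ => w.re * x) atTop atBot :=
    (tendsto_const_mul_atBot_of_neg hw).mpr tendsto_id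
  exact Real.tendsto_exp_atBot.comp h1

lemma tendsto_cexp_atBot_zero {w : ℂ} (hw : 0 < w.re) :
    Tendsto (fun x : ℝ => Complex.exp (w * x)) atBot (nhds 0) := by
  rw [tendsto_zero_iff_norm_tendsto_zero]
  have hn : ∀ x : ℝ, ‖Complex.exp (w * x)‖ = Real.exp (w.re * x) := by
    intro x
    rw [Complex.norm_exp]
    congr 1
    simp [Complex.mul_re]
  simp only [hn]
  have h1 : Tendsto (fun x : ℝ => w.re * x) atBot atBot :=
    (tendsto_const_mul_atBot_of_pos hw).mpr tendsto_id
  exact Real.tendsto_exp_atBot.comp h1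

lemma tendsto_normalized_sum {ι : Type*} [Fintype ι] [DecidableEq ι]
    (C L : ι → ℂ) (ε₀ : ι) (l : Filter ℝ)
    (h : ∀ ε, ε ≠ ε₀ → Tendsto (fun x : ℝ => C ε * Complex.exp ((L ε - L ε₀) * x)) l (nhds 0)) :
    Tendsto (fun x : ℝ => Complex.exp (-(L ε₀) * x) * ∑ ε, C ε * Complex.exp (L ε * x))
      l (nhds (C ε₀)) := by
  have heq : ∀ x : ℝ,
      Complex.exp (-(L ε₀) * x) * ∑ ε, C ε * Complex.exp (L ε * x)
        = ∑ ε, C ε * Complex.exp ((L ε - L ε₀) * x) := by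
    intro x
    rw [Finset.mul_sum]
    refine Finset.sum_congr rfl fun ε _ => ?_
    rw [mul_left_comm, ← Complex.exp_add]
    congr 2
    ring
  have hlim : Tendsto (fun x : ℝ => ∑ ε, C ε * Complex.exp ((L ε - L ε₀) * x)) l
      (nhds (∑ ε : ι, if ε = ε₀ then C ε₀ else 0)) := by
    refine tendsto_finset_sum _ fun ε _ => ?_
    by_cases hε : ε = ε₀
    · subst hε
      simp only [if_pos rfl, sub_self, zero_mul, Complex.exp_zero, mul_one]
      exact tendsto_const_nhds
    · simpa [if_neg hε] using h ε hε
  have hsum : (∑ ε : ι, if ε = ε₀ then C ε₀ else 0) = C ε₀ := by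
    rw [Finset.sum_ite_eq' Finset.univ ε₀ fun _ => C ε₀]
    simp
  rw [hsum] at hlim
  exact hlim.congr fun x => (heq x).symm

lemma prod_Ioi_castSucc' {n : ℕ} (i : Fin n) (h : Fin (n + 1) → ℂ) :
    ∏ j ∈ Finset.Ioi i.castSucc, h j
      = (∏ j ∈ Finset.Ioi i, h j.castSucc) * h (Fin.last n) := by
  have hset : Finset.Ioi (i.castSucc)
      = insert (Fin.last n) ((Finset.Ioi i).map Fin.castSuccOrderEmb.toEmbedding) := by
    ext j
    simp only [Finset.mem_Ioi, Finset.mem_insert, Finset.mem_map,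
      RelEmbedding.coe_toEmbedding, Fin.castSuccOrderEmb_apply]
    constructor
    · intro hj
      rcases Fin.eq_castSucc_or_eq_last j with ⟨j', rfl⟩ | rfl
      · exact Or.inr ⟨j', Fin.castSucc_lt_castSucc_iff.mp hj, rfl⟩
      · exact Or.inl rfl
    · rintro (rfl | ⟨j', hj', rfl⟩)
      · exact Fin.castSucc_lt_last i
      · exact Fin.castSucc_lt_castSucc_iff.mpr hj'
  have hnotmem : Fin.last n ∉ (Finset.Ioi i).map Fin.castSuccOrderEmb.toEmbedding := by
    simp only [Finset.mem_map, RelEmbedding.coe_toEmbedding, Fin.castSuccOrderEmb_apply]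
    rintro ⟨j', _, hj'⟩
    exact (Fin.castSucc_lt_last j').ne hj'
  rw [hset, Finset.prod_insert hnotmem, Finset.prod_map]
  simp only [RelEmbedding.coe_toEmbedding, Fin.castSuccOrderEmb_apply]
  ring

lemma vprod_snoc {n : ℕ} (w : Fin n → ℂ) (μ : ℂ) :
    (∏ i : Fin (n + 1), ∏ j ∈ Finset.Ioi i,
      ((Fin.snoc w μ : Fin (n + 1) → ℂ) j - (Fin.snoc w μ : Fin (n + 1) → ℂ) i))
      = (∏ i : Fin n, ∏ j ∈ Finset.Ioi i, (w j - w i)) * ∏ i : Fin n, (μ - w i) := by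
  rw [Fin.prod_univ_castSucc]
  have hlast : Finset.Ioi (Fin.last n) = (∅ : Finset (Fin (n + 1))) := by
    ext j
    simp [not_lt.mpr (Fin.le_last j)]
  rw [hlast]
  simp only [Finset.prod_empty, mul_one]
  have : ∀ i : Fin n,
      (∏ j ∈ Finset.Ioi i.castSucc,
        ((Fin.snoc w μ : Fin (n + 1) → ℂ) j - (Fin.snoc w μ : Fin (n + 1) → ℂ) i.castSucc))
        = (∏ j ∈ Finset.Ioi i, (w j - w i)) * (μ - w i) := by
    intro i
    rw [prod_Ioi_castSucc']
    simp [Fin.snoc_castSucc, Fin.snoc_last]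
  simp only [this]
  rw [Finset.prod_mul_distrib]

/-- Asymptotics of the Darboux-transformed plane wave for the reflectionless potential: with
seeds `ψⱼ(x) = e^{kⱼx} + c̃ⱼ e^{-kⱼx}` (`0 < k₁ < ⋯ < k_N`, `(-1)^{j-1} c̃ⱼ > 0`), the function
`F(x) = e^{-ikx} W[ψ₁,…,ψ_N,e^{ik·}](x) / W[ψ₁,…,ψ_N](x)` tends to `∏ⱼ (ik - kⱼ)` as
`x → +∞` and to `∏ⱼ (ik + kⱼ)` as `x → -∞`. -/
theorem stmt_16 (N : ℕ) (hN : 1 ≤ N) (k c : Fin N → ℝ)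
    (hk0 : ∀ j, 0 < k j) (hkmono : StrictMono k)
    (hc : ∀ j : Fin N, 0 < (-1 : ℝ) ^ (j : ℕ) * c j)
    (κ : ℝ) (hκ : 0 < κ)
    (ψ : Fin N → ℝ → ℂ)
    (hψ : ∀ j, ψ j = fun y =>
      Complex.exp ((k j * y : ℝ)) + ((c j : ℝ) : ℂ) * Complex.exp ((-(k j) * y : ℝ)))
    (F : ℝ → ℂ)
    (hF : F = fun x : ℝ =>
      Complex.exp (-(Complex.I * (κ : ℂ) * (x : ℂ)))
        * wronskian (N + 1)
            (Fin.snoc ψ (fun y : ℝ => Complex.exp (Complex.I * (κ : ℂ) * (y : ℂ)))) x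
        / wronskian N ψ x) :
    Filter.Tendsto F Filter.atTop (nhds (∏ j : Fin N, (Complex.I * (κ : ℂ) - (k j : ℂ)))) ∧
    Filter.Tendsto F Filter.atBot (nhds (∏ j : Fin N, (Complex.I * (κ : ℂ) + (k j : ℂ)))) := by
  classical
  -- coefficient and exponent data for the seed functions
  set lam2 : Fin N → Bool → ℂ := fun j b => cond b ((k j : ℝ) : ℂ) (-((k j : ℝ) : ℂ)) with hlam2
  set a2 : Fin N → Bool → ℂ := fun j b => cond b 1 ((c j : ℝ) : ℂ) with ha2
  have hf2 : ∀ j, ψ j = fun y : ℝ =>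
      a2 j true * Complex.exp (lam2 j true * y) + a2 j false * Complex.exp (lam2 j false * y) := by
    intro j
    rw [hψ j]
    funext y
    simp only [hlam2, ha2, cond_true, cond_false, one_mul]
    push_cast
    ring_nf
  -- data for the extended family
  set g : ℝ → ℂ := fun y : ℝ => Complex.exp (Complex.I * (κ : ℂ) * (y : ℂ)) with hg
  set lam1 : Fin (N + 1) → Bool → ℂ :=
    Fin.snoc lam2 (fun _ => Complex.I * (κ : ℂ)) with hlam1
  set a1 : Fin (N + 1) → Bool → ℂ := Fin.snoc a2 (fun b => cond b 1 0) with ha1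
  have hf1 : ∀ i : Fin (N + 1), (Fin.snoc ψ g : Fin (N + 1) → ℝ → ℂ) i = fun y : ℝ =>
      a1 i true * Complex.exp (lam1 i true * y) + a1 i false * Complex.exp (lam1 i false * y) := by
    intro i
    refine Fin.lastCases ?_ ?_ i
    · simp only [ha1, hlam1, Fin.snoc_last, hg]
      funext y
      simp
    · intro j
      simp only [ha1, hlam1, Fin.snoc_castSucc]
      exact hf2 j
  set L2 : (Fin N → Bool) → ℂ := fun ε => ∑ i, lam2 i (ε i) with hL2
  set C2 : (Fin N → Bool) → ℂ := fun ε =>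
    (∏ i, a2 i (ε i)) * ∏ i : Fin N, ∏ j ∈ Finset.Ioi i, (lam2 j (ε j) - lam2 i (ε i)) with hC2
  set L1 : (Fin (N + 1) → Bool) → ℂ := fun ε => ∑ i, lam1 i (ε i) with hL1
  set C1 : (Fin (N + 1) → Bool) → ℂ := fun ε =>
    (∏ i, a1 i (ε i)) * ∏ i : Fin (N + 1), ∏ j ∈ Finset.Ioi i, (lam1 j (ε j) - lam1 i (ε i))
    with hC1
  have hW2 : ∀ x : ℝ, wronskian N ψ x = ∑ ε : Fin N → Bool, C2 ε * Complex.exp (L2 ε * x) := by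
    intro x
    rw [wronskian_expansion a2 lam2 ψ hf2 x]
  have hW1 : ∀ x : ℝ, wronskian (N + 1) (Fin.snoc ψ g) x
      = ∑ ε : Fin (N + 1) → Bool, C1 ε * Complex.exp (L1 ε * x) := by
    intro x
    rw [wronskian_expansion a1 lam1 _ hf1 x]
  -- special sign patterns
  set εT : Fin N → Bool := fun _ => true with hεT
  set εF : Fin N → Bool := fun _ => false with hεF
  set εT1 : Fin (N + 1) → Bool := fun _ => true with hεT1
  set εF1 : Fin (N + 1) → Bool := (Fin.snoc (fun _ => false) true : Fin (N + 1) → Bool) with hεF1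
  set s : ℂ := ∑ i : Fin N, ((k i : ℝ) : ℂ) with hs
  -- real parts
  have hre2 : ∀ ε : Fin N → Bool, (L2 ε).re = ∑ i, cond (ε i) (k i) (-(k i)) := by
    intro ε
    rw [hL2]
    simp only
    rw [Complex.re_sum]
    refine Finset.sum_congr rfl fun i _ => ?_
    rw [hlam2]
    cases ε i <;> simp
  have hre1 : ∀ ε : Fin (N + 1) → Bool,
      (L1 ε).re = ∑ j : Fin N, cond (ε j.castSucc) (k j) (-(k j)) := by
    intro ε
    rw [hL1]
    simp only
    rw [Fin.sum_univ_castSucc]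
    simp only [hlam1, Fin.snoc_castSucc, Fin.snoc_last]
    rw [Complex.add_re, Complex.re_sum]
    have : (Complex.I * (κ : ℂ)).re = 0 := by simp
    rw [this, add_zero]
    refine Finset.sum_congr rfl fun i _ => ?_
    rw [hlam2]
    cases ε i.castSucc <;> simp
  -- values of L at the special patterns
  have hL2T : L2 εT = s := by
    rw [hL2, hεT, hs]
    simp [hlam2]
  have hL2F : L2 εF = -s := by
    rw [hL2, hεF, hs]
    simp [hlam2]
  have hL1T : L1 εT1 = s + Complex.I * (κ : ℂ) := by
    rw [hL1, hεT1, hs]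
    simp only
    rw [Fin.sum_univ_castSucc]
    simp [hlam1, hlam2]
  have hL1F : L1 εF1 = -s + Complex.I * (κ : ℂ) := by
    rw [hL1, hεF1, hs]
    simp only
    rw [Fin.sum_univ_castSucc]
    simp [hlam1, hlam2, Fin.snoc_castSucc, Fin.snoc_last]
  -- Vandermonde values
  set VT : ℂ := ∏ i : Fin N, ∏ j ∈ Finset.Ioi i, (((k j : ℝ) : ℂ) - ((k i : ℝ) : ℂ)) with hVT
  set wF : Fin N → ℂ := fun j => -((k j : ℝ) : ℂ) with hwF
  set VF : ℂ := ∏ i : Fin N, ∏ j ∈ Finset.Ioi i, (wF j - wF i) with hVF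
  have hVTne : VT ≠ 0 := by
    rw [hVT]
    refine Finset.prod_ne_zero_iff.mpr fun i _ => Finset.prod_ne_zero_iff.mpr fun j hj => ?_
    rw [← Complex.ofReal_sub, Complex.ofReal_ne_zero]
    exact sub_ne_zero.mpr (hkmono (Finset.mem_Ioi.mp hj)).ne'
  have hVFne : VF ≠ 0 := by
    rw [hVF]
    refine Finset.prod_ne_zero_iff.mpr fun i _ => Finset.prod_ne_zero_iff.mpr fun j hj => ?_
    rw [hwF]
    simp only
    rw [show -((k j : ℝ) : ℂ) - -((k i : ℝ) : ℂ) = ((k i - k j : ℝ) : ℂ) by push_cast; ring,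
      Complex.ofReal_ne_zero]
    exact sub_ne_zero.mpr (hkmono (Finset.mem_Ioi.mp hj)).ne
  have hcne : ∀ i, ((c i : ℝ) : ℂ) ≠ 0 := by
    intro i
    rw [Complex.ofReal_ne_zero]
    intro h0
    have := hc i
    rw [h0, mul_zero] at this
    exact lt_irrefl _ this
  have hPcne : (∏ i : Fin N, ((c i : ℝ) : ℂ)) ≠ 0 :=
    Finset.prod_ne_zero_iff.mpr fun i _ => hcne i
  -- values of C at the special patterns
  have hC2T : C2 εT = VT := by
    rw [hC2, hεT, hVT]
    simp [ha2, hlam2]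
  have hC2F : C2 εF = (∏ i : Fin N, ((c i : ℝ) : ℂ)) * VF := by
    rw [hC2, hεF, hVF]
    simp [ha2, hlam2, hwF]
  have hC1T : C1 εT1 = VT * ∏ i : Fin N, (Complex.I * (κ : ℂ) - ((k i : ℝ) : ℂ)) := by
    rw [hC1, hεT1]
    simp only
    have h1 : (∏ i : Fin (N + 1), a1 i true) = 1 := by
      rw [Fin.prod_univ_castSucc]
      simp [ha1, ha2, Fin.snoc_castSucc, Fin.snoc_last]
    have hw : ∀ i : Fin (N + 1), lam1 i true
        = (Fin.snoc (fun j : Fin N => ((k j : ℝ) : ℂ)) (Complex.I * (κ : ℂ))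
          : Fin (N + 1) → ℂ) i := by
      intro i
      refine Fin.lastCases ?_ ?_ i
      · simp [hlam1, Fin.snoc_last]
      · intro j
        simp [hlam1, hlam2, Fin.snoc_castSucc]
    simp only [hw]
    rw [h1, one_mul, vprod_snoc, hVT]
  have hC1F : C1 εF1 = (∏ i : Fin N, ((c i : ℝ) : ℂ))
      * (VF * ∏ i : Fin N, (Complex.I * (κ : ℂ) - wF i)) := by
    rw [hC1, hεF1]
    simp only
    have h1 : (∏ i : Fin (N + 1),
        a1 i ((Fin.snoc (fun _ => false) true : Fin (N + 1) → Bool) i))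
        = ∏ i : Fin N, ((c i : ℝ) : ℂ) := by
      rw [Fin.prod_univ_castSucc]
      simp [ha1, ha2, Fin.snoc_castSucc, Fin.snoc_last]
    have hw : ∀ i : Fin (N + 1),
        lam1 i ((Fin.snoc (fun _ => false) true : Fin (N + 1) → Bool) i)
        = (Fin.snoc wF (Complex.I * (κ : ℂ)) : Fin (N + 1) → ℂ) i := by
      intro i
      refine Fin.lastCases ?_ ?_ i
      · simp [hlam1, Fin.snoc_last]
      · intro j
        simp [hlam1, hlam2, hwF, Fin.snoc_castSucc]
    simp only [hw]
    rw [h1, vprod_snoc, hVF]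
  -- dominance conditions
  have hlt2T : ∀ ε : Fin N → Bool, ε ≠ εT → (L2 ε).re < (L2 εT).re := by
    intro ε hε
    rw [hre2, hre2]
    refine Finset.sum_lt_sum (fun i _ => ?_) ?_
    · cases hb : ε i
      · simp only [hεT, cond_false, cond_true]
        linarith [hk0 i]
      · simp [hεT]
    · obtain ⟨i, hi⟩ := Function.ne_iff.mp hε
      have hi' : ε i = false := by
        simp only [hεT] at hi
        cases hb : ε i
        · rfl
        · exact absurd hb hi
      refine ⟨i, Finset.mem_univ i, ?_⟩
      simp only [hi', hεT, cond_false, cond_true]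
      linarith [hk0 i]
  have hlt2F : ∀ ε : Fin N → Bool, ε ≠ εF → (L2 εF).re < (L2 ε).re := by
    intro ε hε
    rw [hre2, hre2]
    refine Finset.sum_lt_sum (fun i _ => ?_) ?_
    · cases hb : ε i
      · simp [hεF]
      · simp only [hεF, cond_false, cond_true]
        linarith [hk0 i]
    · obtain ⟨i, hi⟩ := Function.ne_iff.mp hε
      have hi' : ε i = true := by
        simp only [hεF] at hi
        cases hb : ε i
        · exact absurd hb hi
        · rfl
      refine ⟨i, Finset.mem_univ i, ?_⟩
      simp only [hi', hεF, cond_false, cond_true]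
      linarith [hk0 i]
  have hzero1 : ∀ ε : Fin (N + 1) → Bool, ε (Fin.last N) = false → C1 ε = 0 := by
    intro ε hb
    rw [hC1]
    simp only
    apply mul_eq_zero_of_left
    refine Finset.prod_eq_zero (Finset.mem_univ (Fin.last N)) ?_
    rw [ha1]
    simp [Fin.snoc_last, hb]
  have hν1T : ∀ ε : Fin (N + 1) → Bool, ε ≠ εT1 → C1 ε = 0 ∨ (L1 ε).re < (L1 εT1).re := by
    intro ε hε
    by_cases hb : ε (Fin.last N) = false
    · exact Or.inl (hzero1 ε hb)
    · right
      have hbt : ε (Fin.last N) = true := by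
        cases hb2 : ε (Fin.last N)
        · exact absurd hb2 hb
        · rfl
      rw [hre1, hre1]
      refine Finset.sum_lt_sum (fun j _ => ?_) ?_
      · cases hbj : ε j.castSucc
        · simp only [hεT1, cond_false, cond_true]
          linarith [hk0 j]
        · simp [hεT1]
      · obtain ⟨i, hi⟩ := Function.ne_iff.mp hε
        have hi' : ε i = false := by
          simp only [hεT1] at hi
          cases hb2 : ε i
          · rfl
          · exact absurd hb2 hi
        rcases Fin.eq_castSucc_or_eq_last i with ⟨j, rfl⟩ | rfl
        · refine ⟨j, Finset.mem_univ j, ?_⟩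
          simp only [hi', hεT1, cond_false, cond_true]
          linarith [hk0 j]
        · rw [hbt] at hi'
          exact absurd hi' (by simp)
  have hν1F : ∀ ε : Fin (N + 1) → Bool, ε ≠ εF1 → C1 ε = 0 ∨ (L1 εF1).re < (L1 ε).re := by
    intro ε hε
    by_cases hb : ε (Fin.last N) = false
    · exact Or.inl (hzero1 ε hb)
    · right
      have hbt : ε (Fin.last N) = true := by
        cases hb2 : ε (Fin.last N)
        · exact absurd hb2 hb
        · rfl
      rw [hre1, hre1]
      have hFcs : ∀ j : Fin N, εF1 j.castSucc = false := by
        intro j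
        rw [hεF1]
        simp [Fin.snoc_castSucc]
      refine Finset.sum_lt_sum (fun j _ => ?_) ?_
      · rw [hFcs j]
        cases hbj : ε j.castSucc
        · simp
        · simp only [cond_false, cond_true]
          linarith [hk0 j]
      · obtain ⟨i, hi⟩ := Function.ne_iff.mp hε
        rcases Fin.eq_castSucc_or_eq_last i with ⟨j, rfl⟩ | rfl
        · have hi' : ε j.castSucc = true := by
            rw [hFcs j] at hi
            cases hb2 : ε j.castSucc
            · exact absurd hb2 hi
            · rfl
          refine ⟨j, Finset.mem_univ j, ?_⟩
          rw [hFcs j, hi']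
          simp only [cond_false, cond_true]
          linarith [hk0 j]
        · rw [hbt] at hi
          rw [hεF1] at hi
          simp [Fin.snoc_last] at hi
  -- convergence of the normalized Wronskians
  have hG2T : Tendsto (fun x : ℝ => Complex.exp (-(L2 εT) * x) * wronskian N ψ x)
      atTop (nhds (C2 εT)) := by
    refine (tendsto_normalized_sum C2 L2 εT atTop ?_).congr fun x => by rw [hW2 x]
    intro ε hε
    have h0 := tendsto_cexp_atTop_zero (w := L2 ε - L2 εT)
      (by rw [Complex.sub_re]; linarith [hlt2T ε hε])
    simpa using h0.const_mul (C2 ε)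
  have hG2B : Tendsto (fun x : ℝ => Complex.exp (-(L2 εF) * x) * wronskian N ψ x)
      atBot (nhds (C2 εF)) := by
    refine (tendsto_normalized_sum C2 L2 εF atBot ?_).congr fun x => by rw [hW2 x]
    intro ε hε
    have h0 := tendsto_cexp_atBot_zero (w := L2 ε - L2 εF)
      (by rw [Complex.sub_re]; linarith [hlt2F ε hε])
    simpa using h0.const_mul (C2 ε)
  have hG1T : Tendsto (fun x : ℝ =>
      Complex.exp (-(L1 εT1) * x) * wronskian (N + 1) (Fin.snoc ψ g) x)
      atTop (nhds (C1 εT1)) := by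
    refine (tendsto_normalized_sum C1 L1 εT1 atTop ?_).congr fun x => by rw [hW1 x]
    intro ε hε
    rcases hν1T ε hε with h0 | hlt
    · simp only [h0, zero_mul]
      exact tendsto_const_nhds
    · have h0 := tendsto_cexp_atTop_zero (w := L1 ε - L1 εT1)
        (by rw [Complex.sub_re]; linarith)
      simpa using h0.const_mul (C1 ε)
  have hG1B : Tendsto (fun x : ℝ =>
      Complex.exp (-(L1 εF1) * x) * wronskian (N + 1) (Fin.snoc ψ g) x)
      atBot (nhds (C1 εF1)) := by
    refine (tendsto_normalized_sum C1 L1 εF1 atBot ?_).congr fun x => by rw [hW1 x]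
    intro ε hε
    rcases hν1F ε hε with h0 | hlt
    · simp only [h0, zero_mul]
      exact tendsto_const_nhds
    · have h0 := tendsto_cexp_atBot_zero (w := L1 ε - L1 εF1)
        (by rw [Complex.sub_re]; linarith)
      simpa using h0.const_mul (C1 ε)
  -- pointwise formula for F as a quotient of normalized Wronskians
  have hFx : ∀ (u : ℂ) (x : ℝ),
      (Complex.exp (-(u + Complex.I * (κ : ℂ)) * x)
          * wronskian (N + 1) (Fin.snoc ψ g) x)
        / (Complex.exp (-u * x) * wronskian N ψ x) = F x := by
    intro u x
    rw [hF]
    simp only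
    have hsplit : Complex.exp (-(u + Complex.I * (κ : ℂ)) * x)
        = Complex.exp (-u * x) * Complex.exp (-(Complex.I * (κ : ℂ) * x)) := by
      rw [← Complex.exp_add]
      congr 1
      ring
    rw [hsplit, mul_assoc, mul_div_mul_left _ _ (Complex.exp_ne_zero (-u * x))]
  constructor
  · have hdiv := hG1T.div hG2T (by rw [hC2T]; exact hVTne)
    rw [hL1T, hL2T] at hdiv
    have hval : C1 εT1 / C2 εT = ∏ j : Fin N, (Complex.I * (κ : ℂ) - ((k j : ℝ) : ℂ)) := by
      rw [hC1T, hC2T, mul_comm VT, mul_div_assoc, div_self hVTne, mul_one]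
    rw [hval] at hdiv
    exact hdiv.congr fun x => hFx s x
  · have hdiv := hG1B.div hG2B (by rw [hC2F]; exact mul_ne_zero hPcne hVFne)
    rw [hL1F, hL2F] at hdiv
    have hval : C1 εF1 / C2 εF = ∏ j : Fin N, (Complex.I * (κ : ℂ) + ((k j : ℝ) : ℂ)) := by
      rw [hC1F, hC2F, ← mul_assoc, mul_div_cancel_left₀ _ (mul_ne_zero hPcne hVFne)]
      refine Finset.prod_congr rfl fun i _ => ?_
      rw [hwF]
      simp [sub_neg_eq_add]
    rw [hval] at hdiv
    exact hdiv.congr fun x => hFx (-s) x
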